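/- For a channel with joint law p(x^n,y^n) = ∏_i p_X(x_i)·p(y_i|x_i,y_{i−1}) (IID inputs), the mutual information decomposes as I(X^n;Y^n) = Σ_{i=1}^n Σ_{y_i,y_{i−1},x_i} p(y_i,x_i,y_{i−1})·log( p(y_i|x_i,y_{i−1}) / p̄(y_i|y_{i−1}) ), where p̄(y'|y) = Σ_x p_X(x)·p(y'|x,y). -/

import Mathlib

open Finset


/-- Sum over a pi-type of a product of per-coordinate functions. -/
lemma sum_prod_pi {𝒳 : Type*} [Fintype 𝒳] :
    ∀ (k : ℕ) (f : Fin k → 𝒳 → ℝ),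
      (∑ x : Fin k → 𝒳, ∏ i, f i (x i)) = ∏ i, ∑ a, f i a := by
  intro k
  induction k with
  | zero => intro f; simp
  | succ m ih =>
      intro f
      rw [← Equiv.sum_comp (Fin.consEquiv (fun _ : Fin (m+1) => 𝒳))]
      rw [Fintype.sum_prod_type]
      simp only [Fin.consEquiv_apply, Fin.prod_univ_succ, Fin.cons_zero, Fin.cons_succ]
      rw [← ih (fun i a => f i.succ a)]
      simp [← Finset.sum_mul, ← Finset.mul_sum]

/-- Weighted chain sum: summing out a Markov chain with kernels `g i`. -/
lemma chain_sum {𝒴 : Type*} [Fintype 𝒴] :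
    ∀ (m : ℕ) (g : Fin m → 𝒴 → 𝒴 → ℝ), (∀ i y, ∑ y', g i y y' = 1) →
      ∀ (w : 𝒴 → ℝ),
      (∑ y : Fin (m+1) → 𝒴, w (y 0) * ∏ i, g i (y i.castSucc) (y i.succ))
        = ∑ c, w c := by
  intro m
  induction m with
  | zero =>
      intro g _ w
      rw [← Equiv.sum_comp (Equiv.funUnique (Fin 1) 𝒴).symm]
      simp
  | succ m ih =>
      intro g hg w
      rw [← Equiv.sum_comp (Fin.consEquiv (fun _ : Fin (m+2) => 𝒴))]
      rw [Fintype.sum_prod_type]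
      simp only [Fin.consEquiv_apply, Fin.prod_univ_succ, Fin.cons_zero, Fin.cons_succ,
        Fin.castSucc_zero, ← Fin.succ_castSucc]
      rw [Finset.sum_comm]
      have h1 : ∀ y' : Fin (m+1) → 𝒴,
          (∑ c : 𝒴, w c * (g 0 c (y' 0) * ∏ i : Fin m, g i.succ (y' i.castSucc) (y' i.succ)))
          = (∑ c : 𝒴, w c * g 0 c (y' 0)) * ∏ i : Fin m, g i.succ (y' i.castSucc) (y' i.succ) := by
        intro y'; rw [Finset.sum_mul]; congr 1; ext c; ring
      rw [Finset.sum_congr rfl (fun y' _ => h1 y')]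
      rw [ih (fun i => g i.succ) (fun i y => hg i.succ y) (fun d => ∑ c, w c * g 0 c d)]
      rw [Finset.sum_comm]
      simp [← Finset.mul_sum, hg]

lemma swap22 {X Y B A : Type*} [Fintype X] [Fintype Y] [Fintype A] [Fintype B]
    (T : X → Y → B → A → ℝ) :
    (∑ x, ∑ y, ∑ b, ∑ a, T x y b a) = ∑ b, ∑ a, ∑ x, ∑ y, T x y b a := by
  calc (∑ x, ∑ y, ∑ b, ∑ a, T x y b a)
      = ∑ p : X × Y, ∑ q : B × A, T p.1 p.2 q.1 q.2 := by
        simp [Fintype.sum_prod_type]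
    _ = ∑ q : B × A, ∑ p : X × Y, T p.1 p.2 q.1 q.2 := Finset.sum_comm
    _ = _ := by simp [Fintype.sum_prod_type]

lemma swap23 {X Y B C A : Type*} [Fintype X] [Fintype Y] [Fintype A] [Fintype B] [Fintype C]
    (T : X → Y → B → C → A → ℝ) :
    (∑ x, ∑ y, ∑ b, ∑ c, ∑ a, T x y b c a) = ∑ b, ∑ c, ∑ a, ∑ x, ∑ y, T x y b c a := by
  calc (∑ x, ∑ y, ∑ b, ∑ c, ∑ a, T x y b c a)
      = ∑ p : X × Y, ∑ q : B × C × A, T p.1 p.2 q.1 q.2.1 q.2.2 := by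
        simp [Fintype.sum_prod_type]
    _ = ∑ q : B × C × A, ∑ p : X × Y, T p.1 p.2 q.1 q.2.1 q.2.2 := Finset.sum_comm
    _ = _ := by simp [Fintype.sum_prod_type]

lemma group2 {X Y A B : Type*} [Fintype X] [Fintype Y] [Fintype A] [DecidableEq A]
    [Fintype B] [DecidableEq B]
    (w : X → Y → ℝ) (φ : X → Y → A) (ψ : X → Y → B) (f : A → B → ℝ) :
    (∑ x, ∑ y, w x y * f (φ x y) (ψ x y))
      = ∑ b, ∑ a, (∑ x, ∑ y, if φ x y = a ∧ ψ x y = b then w x y else 0) * f a b := by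
  have : ∀ b a, (∑ x, ∑ y, if φ x y = a ∧ ψ x y = b then w x y else 0) * f a b
      = ∑ x, ∑ y, (if φ x y = a ∧ ψ x y = b then w x y else 0) * f a b := by
    intro b a; rw [Finset.sum_mul]; exact Finset.sum_congr rfl fun x _ => (Finset.sum_mul ..)
  simp only [this]
  rw [← swap22 (fun x y b a => (if φ x y = a ∧ ψ x y = b then w x y else 0) * f a b)]
  refine Finset.sum_congr rfl fun x _ => Finset.sum_congr rfl fun y _ => ?_
  rw [Finset.sum_comm]
  simp [ite_and, ite_mul, Finset.sum_ite_eq]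

lemma group3 {X Y A B C : Type*} [Fintype X] [Fintype Y] [Fintype A] [DecidableEq A]
    [Fintype B] [DecidableEq B] [Fintype C] [DecidableEq C]
    (w : X → Y → ℝ) (φ : X → Y → A) (ψ : X → Y → B) (χ : X → Y → C) (f : B → A → C → ℝ) :
    (∑ x, ∑ y, w x y * f (ψ x y) (φ x y) (χ x y))
      = ∑ b, ∑ c, ∑ a,
          (∑ x, ∑ y, if φ x y = a ∧ ψ x y = b ∧ χ x y = c then w x y else 0) * f b a c := by
  have : ∀ b c a, (∑ x, ∑ y, if φ x y = a ∧ ψ x y = b ∧ χ x y = c then w x y else 0) * f b a c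
      = ∑ x, ∑ y, (if φ x y = a ∧ ψ x y = b ∧ χ x y = c then w x y else 0) * f b a c := by
    intro b c a; rw [Finset.sum_mul]; exact Finset.sum_congr rfl fun x _ => (Finset.sum_mul ..)
  simp only [this]
  rw [← swap23 (fun x y b c a =>
    (if φ x y = a ∧ ψ x y = b ∧ χ x y = c then w x y else 0) * f b a c)]
  refine Finset.sum_congr rfl fun x _ => Finset.sum_congr rfl fun y _ => ?_
  have h1 : ∀ b c, (∑ a, (if φ x y = a ∧ ψ x y = b ∧ χ x y = c then w x y else 0) * f b a c)
      = if ψ x y = b ∧ χ x y = c then w x y * f b (φ x y) c else 0 := by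
    intro b c
    simp [ite_and, ite_mul, Finset.sum_ite_eq]
  simp only [h1]
  have h2 : ∀ b, (∑ c, if ψ x y = b ∧ χ x y = c then w x y * f b (φ x y) c else 0)
      = if ψ x y = b then w x y * f b (φ x y) (χ x y) else 0 := by
    intro b; simp [ite_and, Finset.sum_ite_eq]
  simp only [h2]
  simp [Finset.sum_ite_eq]


/-- For the channel with joint law
p(x^n,y^n) = ∏_i pX(x_i)·p(y_i|x_i,y_{i−1}) (IID inputs, y_0 null), the mutual
information decomposes as
I(X^n;Y^n) = Σ_{i=1}^n Σ_{y_i,y_{i−1},x_i} p(y_i,x_i,y_{i−1})·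
  log( p(y_i|x_i,y_{i−1}) / p̄(y_i|y_{i−1}) ), with p̄(y'|y) = Σ_x pX(x)·p(y'|x,y).
The i = 1 term uses the null-y₀ (initial) kernel. -/
theorem mutual_information_decomposition {𝒳 𝒴 : Type*} [Fintype 𝒳] [Fintype 𝒴]
    [DecidableEq 𝒳] [DecidableEq 𝒴] (n : ℕ)
    (pX : 𝒳 → ℝ) (hpX0 : ∀ a, 0 < pX a) (hpX1 : ∑ a, pX a = 1)
    (K0 : 𝒳 → 𝒴 → ℝ) (hK00 : ∀ a b, 0 < K0 a b) (hK01 : ∀ a, ∑ b, K0 a b = 1)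
    (K : 𝒴 → 𝒳 → 𝒴 → ℝ) (hK0 : ∀ y a y', 0 < K y a y')
    (hK1 : ∀ y a, ∑ y', K y a y' = 1)
    -- conditional output law p(y^n|x^n)
    (pcond : (Fin (n + 1) → 𝒳) → (Fin (n + 1) → 𝒴) → ℝ)
    (hpcond : ∀ x y, pcond x y =
      K0 (x 0) (y 0) * ∏ i : Fin n, K (y i.castSucc) (x i.succ) (y i.succ))
    -- joint law p(x^n, y^n)
    (joint : (Fin (n + 1) → 𝒳) → (Fin (n + 1) → 𝒴) → ℝ)
    (hjoint : ∀ x y, joint x y = (∏ i, pX (x i)) * pcond x y)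
    -- output marginal p(y^n)
    (pY : (Fin (n + 1) → 𝒴) → ℝ)
    (hpY : ∀ y, pY y = ∑ x, joint x y)
    -- homogeneous kernels p̄₀(y) and p̄(y'|y)
    (Kbar0 : 𝒴 → ℝ) (hKbar0 : ∀ b, Kbar0 b = ∑ a, pX a * K0 a b)
    (Kbar : 𝒴 → 𝒴 → ℝ) (hKbar : ∀ y y', Kbar y y' = ∑ a, pX a * K y a y')
    -- three-way marginals p(y_{i-1}, x_i, y_i)
    (marg : Fin n → 𝒴 → 𝒳 → 𝒴 → ℝ)
    (hmarg : ∀ i ya a yb, marg i ya a yb =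
      ∑ x : Fin (n + 1) → 𝒳, ∑ y : Fin (n + 1) → 𝒴,
        (if x i.succ = a ∧ y i.castSucc = ya ∧ y i.succ = yb
          then joint x y else 0)) :
    ∑ x : Fin (n + 1) → 𝒳, ∑ y : Fin (n + 1) → 𝒴,
        joint x y * Real.log (pcond x y / pY y)
      = (∑ b : 𝒴, ∑ a : 𝒳,
            (pX a * K0 a b) * Real.log (K0 a b / Kbar0 b))
        + ∑ i : Fin n, ∑ ya : 𝒴, ∑ yb : 𝒴, ∑ a : 𝒳,
            marg i ya a yb * Real.log (K ya a yb / Kbar ya yb) := by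
  have h𝒳 : Nonempty 𝒳 := by
    by_contra h
    rw [not_nonempty_iff] at h
    rw [Finset.univ_eq_empty, Finset.sum_empty] at hpX1
    exact zero_ne_one hpX1
  have hKbar0pos : ∀ b, 0 < Kbar0 b := fun b => by
    rw [hKbar0]
    exact Finset.sum_pos (fun a _ => mul_pos (hpX0 a) (hK00 a b)) Finset.univ_nonempty
  have hKbarpos : ∀ u v, 0 < Kbar u v := fun u v => by
    rw [hKbar]
    exact Finset.sum_pos (fun a _ => mul_pos (hpX0 a) (hK0 u a v)) Finset.univ_nonempty
  -- closed form of pY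
  have hpYeq : ∀ y : Fin (n+1) → 𝒴,
      pY y = Kbar0 (y 0) * ∏ i : Fin n, Kbar (y i.castSucc) (y i.succ) := by
    intro y
    rw [hpY]
    have hx : ∀ x : Fin (n+1) → 𝒳, joint x y
        = ∏ j : Fin (n+1), (Fin.cases (motive := fun _ => 𝒳 → ℝ)
            (fun a => pX a * K0 a (y 0))
            (fun i a => pX a * K (y i.castSucc) a (y i.succ)) j) (x j) := by
      intro x
      rw [hjoint, hpcond, Fin.prod_univ_succ (f := fun j =>
        (Fin.cases (motive := fun _ => 𝒳 → ℝ) (fun a => pX a * K0 a (y 0))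
          (fun i a => pX a * K (y i.castSucc) a (y i.succ)) j) (x j))]
      simp only [Fin.cases_zero, Fin.cases_succ]
      rw [Fin.prod_univ_succ (f := fun j => pX (x j)), Finset.prod_mul_distrib]
      ring
    rw [Finset.sum_congr rfl (fun x _ => hx x), sum_prod_pi]
    rw [Fin.prod_univ_succ]
    simp only [Fin.cases_zero, Fin.cases_succ]
    rw [hKbar0]
    exact congrArg _ (Finset.prod_congr rfl fun i _ => (hKbar _ _).symm)
  -- (x0,y0) marginal
  have hy0 : ∀ (x : Fin (n+1) → 𝒳) (b : 𝒴),
      (∑ y : Fin (n+1) → 𝒴, if y 0 = b then pcond x y else 0) = K0 (x 0) b := by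
    intro x b
    calc (∑ y : Fin (n+1) → 𝒴, if y 0 = b then pcond x y else 0)
        = ∑ y : Fin (n+1) → 𝒴, (if y 0 = b then K0 (x 0) (y 0) else 0)
            * ∏ i : Fin n, K (y i.castSucc) (x i.succ) (y i.succ) := by
          refine Finset.sum_congr rfl fun y _ => ?_
          rw [hpcond]
          split <;> simp
      _ = ∑ c : 𝒴, if c = b then K0 (x 0) c else 0 :=
          chain_sum n (fun i u v => K u (x i.succ) v)
            (fun i u => hK1 u (x i.succ)) (fun c => if c = b then K0 (x 0) c else 0)
      _ = K0 (x 0) b := by simp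
  have hmarg0 : ∀ (a : 𝒳) (b : 𝒴),
      (∑ x : Fin (n+1) → 𝒳, ∑ y : Fin (n+1) → 𝒴,
        if x 0 = a ∧ y 0 = b then joint x y else 0) = pX a * K0 a b := by
    intro a b
    have hstep : ∀ x : Fin (n+1) → 𝒳,
        (∑ y : Fin (n+1) → 𝒴, if x 0 = a ∧ y 0 = b then joint x y else 0)
        = (if x 0 = a then (∏ i, pX (x i)) else 0) * K0 a b := by
      intro x
      simp only [ite_and]
      split
      · rename_i hxa
        have : ∀ y : Fin (n+1) → 𝒴, (if y 0 = b then joint x y else 0)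
            = (∏ i, pX (x i)) * (if y 0 = b then pcond x y else 0) := by
          intro y; rw [hjoint]; split <;> simp
        rw [Finset.sum_congr rfl fun y _ => this y, ← Finset.mul_sum, hy0, hxa]
      · simp
    rw [Finset.sum_congr rfl fun x _ => hstep x, ← Finset.sum_mul]
    have hxsum : (∑ x : Fin (n+1) → 𝒳, if x 0 = a then (∏ i, pX (x i)) else 0) = pX a := by
      rw [← Equiv.sum_comp (Fin.consEquiv (fun _ : Fin (n+1) => 𝒳))]
      rw [Fintype.sum_prod_type]
      simp only [Fin.consEquiv_apply, Fin.cons_zero, Fin.prod_univ_succ, Fin.cons_succ]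
      have : ∀ c : 𝒳, (∑ x' : Fin n → 𝒳, if c = a then pX c * ∏ i, pX (x' i) else 0)
          = if c = a then pX c * ∑ x' : Fin n → 𝒳, ∏ i, pX (x' i) else 0 := by
        intro c; split <;> simp [← Finset.mul_sum]
      rw [Finset.sum_congr rfl fun c _ => this c]
      rw [sum_prod_pi]
      simp [hpX1]
    rw [hxsum]
  -- positivity
  have hpcondpos : ∀ x y, 0 < pcond x y := fun x y => by
    rw [hpcond]
    exact mul_pos (hK00 _ _) (Finset.prod_pos fun i _ => hK0 _ _ _)
  -- log decomposition
  have hlog : ∀ (x : Fin (n+1) → 𝒳) (y : Fin (n+1) → 𝒴),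
      Real.log (pcond x y / pY y)
      = Real.log (K0 (x 0) (y 0) / Kbar0 (y 0))
        + ∑ i : Fin n, Real.log (K (y i.castSucc) (x i.succ) (y i.succ)
            / Kbar (y i.castSucc) (y i.succ)) := by
    intro x y
    have h1 : K0 (x 0) (y 0) ≠ 0 := ne_of_gt (hK00 _ _)
    have h2 : Kbar0 (y 0) ≠ 0 := ne_of_gt (hKbar0pos _)
    have h3 : (∏ i : Fin n, K (y i.castSucc) (x i.succ) (y i.succ)) ≠ 0 :=
      ne_of_gt (Finset.prod_pos fun i _ => hK0 _ _ _)
    have h4 : (∏ i : Fin n, Kbar (y i.castSucc) (y i.succ)) ≠ 0 :=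
      ne_of_gt (Finset.prod_pos fun i _ => hKbarpos _ _)
    rw [hpcond, hpYeq]
    rw [Real.log_div (mul_ne_zero h1 h3) (mul_ne_zero h2 h4),
      Real.log_mul h1 h3, Real.log_mul h2 h4,
      Real.log_prod (fun i _ => ne_of_gt (hK0 _ _ _)),
      Real.log_prod (fun i _ => ne_of_gt (hKbarpos _ _)),
      Real.log_div h1 h2]
    rw [Finset.sum_congr rfl (fun i (_ : i ∈ Finset.univ) =>
      Real.log_div (ne_of_gt (hK0 (y i.castSucc) (x i.succ) (y i.succ)))
        (ne_of_gt (hKbarpos (y i.castSucc) (y i.succ))))]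
    rw [Finset.sum_sub_distrib]
    ring
  -- assemble
  calc (∑ x : Fin (n+1) → 𝒳, ∑ y : Fin (n+1) → 𝒴,
          joint x y * Real.log (pcond x y / pY y))
      = ∑ x : Fin (n+1) → 𝒳, ∑ y : Fin (n+1) → 𝒴,
          (joint x y * Real.log (K0 (x 0) (y 0) / Kbar0 (y 0))
            + ∑ i : Fin n, joint x y * Real.log (K (y i.castSucc) (x i.succ) (y i.succ)
                / Kbar (y i.castSucc) (y i.succ))) := by
        refine Finset.sum_congr rfl fun x _ => Finset.sum_congr rfl fun y _ => ?_
        rw [hlog x y, mul_add, Finset.mul_sum]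
    _ = (∑ x : Fin (n+1) → 𝒳, ∑ y : Fin (n+1) → 𝒴,
          joint x y * Real.log (K0 (x 0) (y 0) / Kbar0 (y 0)))
        + ∑ x : Fin (n+1) → 𝒳, ∑ y : Fin (n+1) → 𝒴, ∑ i : Fin n,
            joint x y * Real.log (K (y i.castSucc) (x i.succ) (y i.succ)
              / Kbar (y i.castSucc) (y i.succ)) := by
        rw [← Finset.sum_add_distrib]
        exact Finset.sum_congr rfl fun x _ => Finset.sum_add_distrib
    _ = (∑ b : 𝒴, ∑ a : 𝒳, (pX a * K0 a b) * Real.log (K0 a b / Kbar0 b))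
        + ∑ i : Fin n, ∑ ya : 𝒴, ∑ yb : 𝒴, ∑ a : 𝒳,
            marg i ya a yb * Real.log (K ya a yb / Kbar ya yb) := by
        congr 1
        · rw [group2 joint (fun x y => x 0) (fun x y => y 0)
            (fun a b => Real.log (K0 a b / Kbar0 b))]
          exact Finset.sum_congr rfl fun b _ => Finset.sum_congr rfl fun a _ => by
            rw [hmarg0 a b]
        · rw [Finset.sum_congr rfl fun x (_ : x ∈ Finset.univ) => Finset.sum_comm,
            Finset.sum_comm]
          refine Finset.sum_congr rfl fun i _ => ?_
          rw [group3 joint (fun x y => x i.succ) (fun x y => y i.castSucc)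
            (fun x y => y i.succ) (fun b a c => Real.log (K b a c / Kbar b c))]
          exact Finset.sum_congr rfl fun ya _ => Finset.sum_congr rfl fun yb _ =>
            Finset.sum_congr rfl fun a _ => by rw [← hmarg]
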